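/- Let c, ε, s be positive constants with 6ε^c < 1. Let (X, d) be a compact metric space with a Borel probability measure μ. Suppose that for every x ∈ X there exists a Borel set A ⊆ X containing x with 0 < diam A < ε/6 and μ(A) ≥ (diam A)^s. Then the ε-scale Hausdorff dimension satisfies dim_H(X, d, ε) ≤ (1 + c)·s. -/

import Mathlib

open scoped Classical

open Metric MeasureTheory ENNReal

/-- The `ε`-scale `s`-dimensional Hausdorff quantity
`ℋ^s_ε(X,d) = inf { Σ_i (diam E_i)^s : X = ∪_i E_i, diam E_i < ε }`,
with the conventions `(diam ∅)^s = 0` and `0^0 = 1` (via `Real.rpow`). -/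
noncomputable def scaleHausdorff (X : Type*) [MetricSpace X] (s ε : ℝ) : ℝ≥0∞ :=
  ⨅ (E : ℕ → Set X) (_ : (⋃ i, E i) = Set.univ) (_ : ∀ i, Metric.diam (E i) < ε),
    ∑' i, (if E i = ∅ then 0 else ENNReal.ofReal (Metric.diam (E i) ^ s))

/-- The `ε`-scale Hausdorff dimension `dim_H(X,d,ε) = sup{ s ≥ 0 : ℋ^s_ε(X,d) ≥ 1 }`. -/
noncomputable def scaleDimH (X : Type*) [MetricSpace X] (ε : ℝ) : ℝ :=
  sSup {s : ℝ | 0 ≤ s ∧ 1 ≤ scaleHausdorff X s ε}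

/-- Tsukamoto's geometric measure theory lemma: if `6 ε^c < 1` and every point of a
compact metric space `X` with Borel probability measure `μ` lies in a Borel set `A`
with `0 < diam A < ε/6` and `μ(A) ≥ (diam A)^s`, then `dim_H(X,d,ε) ≤ (1+c)s`. -/
theorem scaleDimH_le_of_measure_lower_bound (X : Type*) [MetricSpace X] [CompactSpace X]
    [MeasurableSpace X] [BorelSpace X] (μ : Measure X) [IsProbabilityMeasure μ]
    (c ε s : ℝ) (hc : 0 < c) (hε : 0 < ε) (hs : 0 < s)
    (h6 : 6 * ε ^ c < 1)
    (hA : ∀ x : X, ∃ A : Set X, MeasurableSet A ∧ x ∈ A ∧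
      0 < Metric.diam A ∧ Metric.diam A < ε / 6 ∧
      ENNReal.ofReal (Metric.diam A ^ s) ≤ μ A) :
    scaleDimH X ε ≤ (1 + c) * s := by
  have hεc0 : 0 < ε ^ c := Real.rpow_pos_of_pos hε c
  have hε1 : ε < 1 := by
    by_contra h
    push_neg at h
    have h1 : (1:ℝ) ≤ ε ^ c := Real.one_le_rpow h hc.le
    nlinarith
  choose A hAm hAx hAd hAd6 hAμ using hA
  obtain ⟨u, -, hdisj, hcov⟩ := Vitali.exists_disjoint_subfamily_covering_enlargement
    A Set.univ (fun x => Metric.diam (A x)) 2 one_lt_two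
    (fun a _ => Metric.diam_nonneg) (ε/6) (fun a _ => (hAd6 a).le)
    (fun a _ => ⟨a, hAx a⟩)
  -- countability of `u`
  have hμpos : ∀ x : X, 0 < μ (A x) := by
    intro x
    refine lt_of_lt_of_le ?_ (hAμ x)
    rw [ENNReal.ofReal_pos]
    exact Real.rpow_pos_of_pos (hAd x) s
  haveI hucnt : Countable ↥u := by
    have hc1 := MeasureTheory.Measure.countable_meas_pos_of_disjoint_iUnion
      (μ := μ) (As := fun b : ↥u => A ↑b) (fun b => hAm ↑b)
      (fun b b' hbb' => hdisj b.2 b'.2 (fun h => hbb' (Subtype.ext h)))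
    have huniv : {i : ↥u | 0 < μ (A ↑i)} = Set.univ :=
      Set.eq_univ_of_forall fun b => hμpos ↑b
    rw [huniv, Set.countable_univ_iff] at hc1
    exact hc1
  haveI : Encodable ↥u := Encodable.ofCountable ↥u
  have henc : Function.Injective (Encodable.encode : ↥u → ℕ) := Encodable.encode_injective
  set C : ↥u → Set X := fun b => Metric.cthickening (2 * Metric.diam (A ↑b)) (A ↑b) with hC
  set E : ℕ → Set X := fun n => ⋃ (b : ↥u) (_ : Encodable.encode b = n), C b with hE
  have hEkey : ∀ b : ↥u, E (Encodable.encode b) = C b := by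
    intro b
    ext x
    simp only [hE, Set.mem_iUnion]
    constructor
    · rintro ⟨b', hb', hx⟩
      rwa [henc hb'] at hx
    · exact fun hx => ⟨b, rfl, hx⟩
  have hEcases : ∀ n, E n = ∅ ∨ ∃ b : ↥u, Encodable.encode b = n ∧ E n = C b := by
    intro n
    by_cases h : ∃ b : ↥u, Encodable.encode b = n
    · obtain ⟨b, hb⟩ := h
      exact Or.inr ⟨b, hb, by rw [← hb, hEkey]⟩
    · push_neg at h
      left
      simp only [hE]
      exact Set.iUnion_eq_empty.mpr fun b => by simp [h b]
  have hcovE : (⋃ n, E n) = Set.univ := by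
    apply Set.eq_univ_of_forall
    intro x
    obtain ⟨b, hbu, ⟨y, hyA, hyB⟩, hle⟩ := hcov x (Set.mem_univ x)
    have hdxy : dist x y ≤ 2 * Metric.diam (A b) :=
      (Metric.dist_le_diam_of_mem isBounded_of_compactSpace (hAx x) hyA).trans hle
    have hxC : x ∈ C ⟨b, hbu⟩ :=
      Metric.mem_cthickening_of_dist_le x y _ _ hyB hdxy
    exact Set.mem_iUnion.mpr ⟨Encodable.encode (⟨b, hbu⟩ : ↥u), (hEkey _).symm ▸ hxC⟩
  have hdiamE : ∀ n, Metric.diam (E n) < ε := by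
    intro n
    rcases hEcases n with h | ⟨b, -, h⟩
    · rw [h, Metric.diam_empty]; exact hε
    · rw [h]
      have h1 : Metric.diam (C b) ≤ Metric.diam (A ↑b) + 2 * (2 * Metric.diam (A ↑b)) :=
        Metric.diam_cthickening_le _ (by have := (hAd ↑b).le; positivity)
      have h2 := hAd6 ↑b
      linarith
  -- conclude via sup
  refine Real.sSup_le ?_ (by positivity)
  rintro s' ⟨hs'0, hs'H⟩
  by_contra hgt
  push_neg at hgt
  have hss' : s + c * s ≤ s' := by nlinarith
  set term : ℕ → ℝ≥0∞ :=
    fun n => if E n = ∅ then 0 else ENNReal.ofReal (Metric.diam (E n) ^ s') with hterm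
  have hle1 : scaleHausdorff X s' ε ≤ ∑' n, term n := by
    refine iInf_le_of_le E (iInf_le_of_le hcovE ?_)
    exact iInf_le _ hdiamE
  set K : ℝ≥0∞ := ENNReal.ofReal (6 ^ s * ε ^ (c * s)) with hK
  have hsupp : Function.support term ⊆ Set.range (Encodable.encode : ↥u → ℕ) := by
    intro n hn
    rcases hEcases n with h | ⟨b, hb, -⟩
    · simp [hterm, h] at hn
    · exact ⟨b, hb⟩
  have htsum : ∑' n, term n = ∑' b : ↥u, term (Encodable.encode b) :=
    (henc.tsum_eq hsupp).symm
  have htermle : ∀ b : ↥u, term (Encodable.encode b) ≤ K * μ (A ↑b) := by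
    intro b
    have hd0 : 0 < Metric.diam (A ↑b) := hAd ↑b
    have hCne : E (Encodable.encode b) ≠ ∅ := by
      rw [hEkey b]
      exact Set.Nonempty.ne_empty ⟨↑b, Metric.self_subset_cthickening _ (hAx ↑b)⟩
    rw [hterm]
    simp only [hCne, if_neg, ite_false]
    rw [hEkey b]
    set d := Metric.diam (A ↑b) with hd
    have h1 : Metric.diam (C b) ≤ 6 * d := by
      have := Metric.diam_cthickening_le (A ↑b) (by positivity : (0:ℝ) ≤ 2 * d)
      rw [← hd] at this
      linarith
    have h2 : Metric.diam (C b) ^ s' ≤ (6 * d) ^ s' :=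
      Real.rpow_le_rpow Metric.diam_nonneg h1 hs'0
    have h3 : (6 * d) ^ s' = (6 * d) ^ (s' - s) * (6 * d) ^ s := by
      rw [← Real.rpow_add (by positivity)]
      ring_nf
    have h4 : (6 * d) ^ (s' - s) ≤ ε ^ (s' - s) := by
      refine Real.rpow_le_rpow (by positivity) (by linarith [hAd6 ↑b]) (by nlinarith)
    have h5 : ε ^ (s' - s) ≤ ε ^ (c * s) :=
      Real.rpow_le_rpow_of_exponent_ge hε hε1.le (by nlinarith)
    have h6' : (6 * d) ^ s = 6 ^ s * d ^ s := Real.mul_rpow (by norm_num) hd0.le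
    have h7 : Metric.diam (C b) ^ s' ≤ 6 ^ s * ε ^ (c * s) * d ^ s := by
      calc Metric.diam (C b) ^ s' ≤ (6 * d) ^ s' := h2
        _ = (6 * d) ^ (s' - s) * (6 * d) ^ s := h3
        _ ≤ ε ^ (c * s) * (6 ^ s * d ^ s) := by
            rw [← h6']
            exact mul_le_mul (h4.trans h5) le_rfl (Real.rpow_nonneg (by positivity) s)
              (Real.rpow_nonneg hε.le _)
        _ = 6 ^ s * ε ^ (c * s) * d ^ s := by ring
    calc ENNReal.ofReal (Metric.diam (C b) ^ s')
        ≤ ENNReal.ofReal (6 ^ s * ε ^ (c * s) * d ^ s) := ENNReal.ofReal_le_ofReal h7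
      _ = K * ENNReal.ofReal (d ^ s) := by
          rw [hK, ← ENNReal.ofReal_mul (by positivity)]
      _ ≤ K * μ (A ↑b) := mul_le_mul_right (hAμ ↑b) K
  have hsum2 : ∑' b : ↥u, term (Encodable.encode b) ≤ K := by
    calc ∑' b : ↥u, term (Encodable.encode b) ≤ ∑' b : ↥u, K * μ (A ↑b) :=
          ENNReal.tsum_le_tsum htermle
      _ = K * ∑' b : ↥u, μ (A ↑b) := by rw [ENNReal.tsum_mul_left]
      _ = K * μ (⋃ b : ↥u, A ↑b) := by
          congr 1
          exact Eq.symm <| MeasureTheory.measure_iUnion (ι := ↥u) (f := fun b : ↥u => A ↑b)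
            (fun b b' hbb' => hdisj b.2 b'.2 (fun h => hbb' (Subtype.ext h)))
            (fun b => hAm ↑b)
      _ ≤ K * 1 := mul_le_mul_right prob_le_one K
      _ = K := mul_one K
  have hKlt : K < 1 := by
    have h61 : 6 ^ s * ε ^ (c * s) < 1 := by
      have hlt := Real.rpow_lt_one (by positivity : (0:ℝ) ≤ 6 * ε ^ c) h6 hs
      rwa [Real.mul_rpow (by norm_num) hεc0.le, ← Real.rpow_mul hε.le] at hlt
    rw [hK]
    exact ENNReal.ofReal_lt_one.mpr h61
  have : scaleHausdorff X s' ε < 1 := lt_of_le_of_lt (hle1.trans (htsum ▸ hsum2)) hKlt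
  exact absurd hs'H (not_le.mpr this)
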